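/- Let Λ ⊂ ℝ^{n+1} be a unimodular lattice, 𝐯 ∈ Λ primitive, and suppose that at some time t₀ one has λ₂(Λ_t₀)/λ₁(Λ_t₀) > e^{(n+1)S/n} where Λ_t = a_t Λ and 𝐯 achieves λ₁(Λ_{t₀}), i.e. ‖a_{t₀}𝐯‖ = λ₁(Λ_{t₀}). Then for all s ∈ [0,S], the vector 𝐯 still achieves the first minimum: ‖a_{t₀+s}𝐯‖ = λ₁(Λ_{t₀+s}). -/

import Mathlib

open Real Filter

/-- The `i`-th successive minimum of the lattice `g ℤ^{n+1}` for the sup norm on `ℝ^{n+1}`: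
the least `r ≥ 0` such that the lattice contains `i` linearly independent vectors of
norm at most `r`. -/
noncomputable def succMin (n : ℕ) (g : Matrix (Fin (n+1)) (Fin (n+1)) ℝ) (i : ℕ) : ℝ :=
  sInf {r | 0 ≤ r ∧ ∃ w : Fin i → (Fin (n+1) → ℤ),
    LinearIndependent ℝ (fun j => fun l => ((w j l : ℝ))) ∧
    ∀ j, ‖g.mulVec (fun l => (w j l : ℝ))‖ ≤ r}

/-- The diagonal matrix `a_t = diag(e^{-t}, e^{t/n}, …, e^{t/n})`. -/
noncomputable def aMat (n : ℕ) (t : ℝ) : Matrix (Fin (n+1)) (Fin (n+1)) ℝ :=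
  Matrix.diagonal (fun i => if i = 0 then Real.exp (-t) else Real.exp (t / n))

/-! ### Auxiliary lemmas -/

/-- Bézout's identity for the gcd of a finite family of integers. -/
lemma SFM.bezout_finset {ι : Type*} [DecidableEq ι] (s : Finset ι) (f : ι → ℤ) :
    ∃ u : ι → ℤ, ∑ i ∈ s, u i * f i = s.gcd f := by
  classical
  induction s using Finset.induction_on with
  | empty => exact ⟨0, by simp⟩
  | insert _ _ ha ih =>
    rename_i a s
    obtain ⟨u, hu⟩ := ih
    refine ⟨fun i => if i = a then Int.gcdA (f a) (s.gcd f) else Int.gcdB (f a) (s.gcd f) * u i, ?_⟩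
    rw [Finset.sum_insert ha, Finset.gcd_insert, ← Int.coe_gcd, Int.gcd_eq_gcd_ab]
    simp only [if_pos rfl]
    rw [Finset.sum_congr rfl (fun i hi => by
      simp only [if_neg (fun h : i = a => ha (h ▸ hi))]; rw [mul_assoc]), ← Finset.mul_sum, hu]
    simp only [if_true]; ring

lemma SFM.aMat_entry (n : ℕ) (t : ℝ) (y : Fin (n+1) → ℝ) (i : Fin (n+1)) :
    (aMat n t).mulVec y i = (if i = 0 then Real.exp (-t) else Real.exp (t / n)) * y i :=
  Matrix.mulVec_diagonal _ _ _

lemma SFM.aMat_factor (n : ℕ) (t s : ℝ) (y : Fin (n+1) → ℝ) (i : Fin (n+1)) :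
    (aMat n (t+s)).mulVec y i
      = (if i = 0 then Real.exp (-s) else Real.exp (s / n)) * (aMat n t).mulVec y i := by
  rw [SFM.aMat_entry, SFM.aMat_entry]
  by_cases h : i = 0
  · rw [if_pos h, if_pos h, if_pos h, ← mul_assoc, ← Real.exp_add]; ring_nf
  · rw [if_neg h, if_neg h, if_neg h, ← mul_assoc, ← Real.exp_add, add_div]; ring_nf

lemma SFM.norm_step_up (n : ℕ) (t s : ℝ) (hs : 0 ≤ s) (y : Fin (n+1) → ℝ) :
    ‖(aMat n (t+s)).mulVec y‖ ≤ Real.exp (s/n) * ‖(aMat n t).mulVec y‖ := by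
  rw [pi_norm_le_iff_of_nonneg (by positivity)]
  intro i
  rw [SFM.aMat_factor, Real.norm_eq_abs, abs_mul]
  have h1 : |if i = 0 then Real.exp (-s) else Real.exp (s / n)| ≤ Real.exp (s/n) := by
    split
    · rw [abs_of_pos (Real.exp_pos _)]
      have hsn : 0 ≤ s/(n:ℝ) := div_nonneg hs (Nat.cast_nonneg n)
      exact Real.exp_le_exp.2 (by linarith)
    · rw [abs_of_pos (Real.exp_pos _)]
  apply mul_le_mul h1 ?_ (abs_nonneg _) (Real.exp_pos _).le
  exact (Real.norm_eq_abs _) ▸ norm_le_pi_norm ((aMat n t).mulVec y) i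

lemma SFM.norm_step_down (n : ℕ) (t s : ℝ) (hs : 0 ≤ s) (y : Fin (n+1) → ℝ) :
    ‖(aMat n t).mulVec y‖ ≤ Real.exp s * ‖(aMat n (t+s)).mulVec y‖ := by
  rw [pi_norm_le_iff_of_nonneg (by positivity)]
  intro i
  have hkey : (aMat n t).mulVec y i
      = (if i = 0 then Real.exp s else Real.exp (-(s/n))) * (aMat n (t+s)).mulVec y i := by
    rw [SFM.aMat_factor]
    split <;> rw [← mul_assoc, ← Real.exp_add] <;> simp
  rw [hkey, Real.norm_eq_abs, abs_mul]
  have h1 : |if i = 0 then Real.exp s else Real.exp (-(s/n))| ≤ Real.exp s := by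
    split
    · rw [abs_of_pos (Real.exp_pos _)]
    · rw [abs_of_pos (Real.exp_pos _)]
      have hsn : 0 ≤ s/(n:ℝ) := div_nonneg hs (Nat.cast_nonneg n)
      exact Real.exp_le_exp.2 (by linarith)
  apply mul_le_mul h1 ?_ (abs_nonneg _) (Real.exp_pos _).le
  exact (Real.norm_eq_abs _) ▸ norm_le_pi_norm ((aMat n (t+s)).mulVec y) i

/-- The defining set of `succMin`. -/
def SFM.SMSet (n : ℕ) (g : Matrix (Fin (n+1)) (Fin (n+1)) ℝ) (i : ℕ) : Set ℝ :=
  {r | 0 ≤ r ∧ ∃ w : Fin i → (Fin (n+1) → ℤ),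
    LinearIndependent ℝ (fun j => fun l => ((w j l : ℝ))) ∧
    ∀ j, ‖g.mulVec (fun l => (w j l : ℝ))‖ ≤ r}

lemma SFM.succMin_eq (n : ℕ) (g : Matrix (Fin (n+1)) (Fin (n+1)) ℝ) (i : ℕ) :
    succMin n g i = sInf (SFM.SMSet n g i) := rfl

lemma SFM.smset_bdd (n : ℕ) (g : Matrix (Fin (n+1)) (Fin (n+1)) ℝ) (i : ℕ) :
    BddBelow (SFM.SMSet n g i) := ⟨0, fun _ hr => hr.1⟩

lemma SFM.mem_single (n : ℕ) (A : Matrix (Fin (n+1)) (Fin (n+1)) ℝ) (v : Fin (n+1) → ℤ)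
    (hv : (fun l => (v l : ℝ)) ≠ 0) :
    ‖A.mulVec (fun l => (v l : ℝ))‖ ∈ SFM.SMSet n A 1 :=
  ⟨norm_nonneg _, fun _ => v, linearIndependent_unique_iff.2 hv, fun _ => le_rfl⟩

lemma SFM.mem_pair (n : ℕ) (A : Matrix (Fin (n+1)) (Fin (n+1)) ℝ) (v w : Fin (n+1) → ℤ)
    (h : LinearIndependent ℝ ![(fun l => ((v l : ℝ))), (fun l => ((w l : ℝ)))])
    (r : ℝ) (hv : ‖A.mulVec (fun l => (v l : ℝ))‖ ≤ r)
    (hw : ‖A.mulVec (fun l => (w l : ℝ))‖ ≤ r) : r ∈ SFM.SMSet n A 2 := by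
  refine ⟨le_trans (norm_nonneg _) hv, ![v, w], ?_, ?_⟩
  · have he : (fun j => fun l => ((![v, w] j l : ℝ)))
        = ![(fun l => ((v l : ℝ))), (fun l => ((w l : ℝ)))] := by
      funext j
      fin_cases j <;> rfl
    rw [he]; exact h
  · intro j
    fin_cases j
    · exact hv
    · exact hw

/-- If at time `t₀` the primitive vector `𝐯` achieves `λ₁` and `λ₂/λ₁ > e^{(n+1)S/n}`, then
`𝐯` keeps achieving the first minimum on the whole time interval `[t₀, t₀ + S]`. -/
theorem stays_first_minimum (n : ℕ) (hn : 1 ≤ n)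
    (g : Matrix (Fin (n+1)) (Fin (n+1)) ℝ) (hg : |g.det| = 1)
    (v : Fin (n+1) → ℤ) (hv : v ≠ 0)
    (hprim : Finset.univ.gcd (fun i => v i) = 1)
    (t₀ S : ℝ) (hS : 0 ≤ S)
    (hmin : ‖(aMat n t₀ * g).mulVec (fun i => (v i : ℝ))‖ = succMin n (aMat n t₀ * g) 1)
    (hgap : Real.exp (((n : ℝ) + 1) * S / n) * succMin n (aMat n t₀ * g) 1
      < succMin n (aMat n t₀ * g) 2) :
    ∀ s ∈ Set.Icc (0 : ℝ) S,
      ‖(aMat n (t₀ + s) * g).mulVec (fun i => (v i : ℝ))‖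
        = succMin n (aMat n (t₀ + s) * g) 1 := by
  intro s hs
  obtain ⟨hs0, hsS⟩ := hs
  have hnR : (0:ℝ) < (n:ℝ) := by exact_mod_cast Nat.lt_of_lt_of_le Nat.zero_lt_one hn
  have hvR : (fun l => ((v l : ℝ))) ≠ 0 := by
    intro h
    apply hv
    funext i
    have := congrFun h i
    simp only [Pi.zero_apply] at this
    exact_mod_cast this
  set vR : Fin (n+1) → ℝ := fun l => (v l : ℝ) with hvRdef
  set A : Matrix (Fin (n+1)) (Fin (n+1)) ℝ := aMat n (t₀ + s) * g with hA
  set A₀ : Matrix (Fin (n+1)) (Fin (n+1)) ℝ := aMat n t₀ * g with hA₀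
  -- norm comparisons
  have h_up : ∀ x : Fin (n+1) → ℝ, ‖A.mulVec x‖ ≤ Real.exp (s/n) * ‖A₀.mulVec x‖ := by
    intro x
    rw [hA, hA₀, ← Matrix.mulVec_mulVec, ← Matrix.mulVec_mulVec]
    exact SFM.norm_step_up n t₀ s hs0 (g.mulVec x)
  have h_down : ∀ x : Fin (n+1) → ℝ, ‖A₀.mulVec x‖ ≤ Real.exp s * ‖A.mulVec x‖ := by
    intro x
    rw [hA, hA₀, ← Matrix.mulVec_mulVec, ← Matrix.mulVec_mulVec]
    exact SFM.norm_step_down n t₀ s hs0 (g.mulVec x)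
  have hlam0 : 0 ≤ succMin n A₀ 1 := hmin ▸ norm_nonneg _
  refine le_antisymm ?_ (csInf_le (SFM.smset_bdd n A 1) (SFM.mem_single n A v hvR))
  rw [SFM.succMin_eq]
  refine le_csInf ⟨_, SFM.mem_single n A v hvR⟩ ?_
  rintro r ⟨hr0, W, hWli, hWle⟩
  by_contra hlt
  push_neg at hlt
  set wR : Fin (n+1) → ℝ := fun l => ((W 0 l : ℝ)) with hwRdef
  have hwR : wR ≠ 0 := hWli.ne_zero 0
  have hwle : ‖A.mulVec wR‖ ≤ r := hWle 0
  by_cases hind : LinearIndependent ℝ ![vR, wR]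
  · -- independent case: contradiction with the gap assumption
    have hww : ‖A.mulVec wR‖ ≤ ‖A.mulVec vR‖ := le_of_lt (lt_of_le_of_lt hwle hlt)
    have hmem2 : Real.exp s * ‖A.mulVec vR‖ ∈ SFM.SMSet n A₀ 2 := by
      refine SFM.mem_pair n A₀ v (W 0) hind _ ?_ ?_
      · exact h_down vR
      · exact le_trans (h_down wR)
          (mul_le_mul_of_nonneg_left hww (Real.exp_pos _).le)
    have h2 : succMin n A₀ 2 ≤ Real.exp s * ‖A.mulVec vR‖ :=
      csInf_le (SFM.smset_bdd n A₀ 2) hmem2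
    have h3 : Real.exp s * ‖A.mulVec vR‖
        ≤ Real.exp s * (Real.exp (s/n) * ‖A₀.mulVec vR‖) :=
      mul_le_mul_of_nonneg_left (h_up vR) (Real.exp_pos _).le
    have h4 : Real.exp s * (Real.exp (s/n) * ‖A₀.mulVec vR‖)
        = Real.exp (((n:ℝ)+1) * s / n) * succMin n A₀ 1 := by
      rw [hmin, ← mul_assoc, ← Real.exp_add]
      congr 2
      field_simp
    have h5 : Real.exp (((n:ℝ)+1) * s / n) * succMin n A₀ 1
        ≤ Real.exp (((n:ℝ)+1) * S / n) * succMin n A₀ 1 := by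
      refine mul_le_mul_of_nonneg_right (Real.exp_le_exp.2 ?_) hlam0
      have h1 : (0:ℝ) ≤ (n:ℝ) + 1 := by linarith
      have h2 : ((n:ℝ)+1) * s ≤ ((n:ℝ)+1) * S := by nlinarith
      gcongr
    have : succMin n A₀ 2 < succMin n A₀ 2 :=
      lt_of_le_of_lt (le_trans h2 (le_trans h3 (le_of_eq h4) |>.trans h5)) hgap
    exact lt_irrefl _ this
  · -- dependent case: W 0 is an integer multiple of v
    rw [linearIndependent_fin2] at hind
    push_neg at hind
    simp only [Matrix.cons_val_one, Matrix.head_cons, Matrix.cons_val_zero] at hind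
    obtain ⟨a, ha⟩ := hind hwR
    have ha0 : a ≠ 0 := by
      rintro rfl
      rw [zero_smul] at ha
      exact hvR ha.symm
    have hwc : wR = a⁻¹ • vR := by
      rw [← ha, smul_smul, inv_mul_cancel₀ ha0, one_smul]
    set c := a⁻¹ with hcdef
    have hc0 : c ≠ 0 := inv_ne_zero ha0
    obtain ⟨u, hu⟩ := SFM.bezout_finset Finset.univ (fun i => v i)
    rw [hprim] at hu
    have hsum1 : (∑ i, (u i:ℝ) * (v i:ℝ)) = 1 := by
      have := congrArg (fun z : ℤ => (z:ℝ)) hu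
      push_cast at this
      exact this
    have hcint : c = ((∑ i, u i * W 0 i : ℤ) : ℝ) := by
      push_cast
      calc c = ∑ i, (u i:ℝ) * (c * (v i:ℝ)) := by
              rw [Finset.sum_congr rfl (fun i _ => by rw [mul_left_comm]), ← Finset.mul_sum,
                hsum1, mul_one]
        _ = ∑ i, (u i:ℝ) * ((W 0 i : ℝ)) := by
              refine Finset.sum_congr rfl fun i _ => ?_
              have h := congrFun hwc i
              simp only [Pi.smul_apply, smul_eq_mul] at h
              rw [← h]
    have hm0 : (∑ i, u i * W 0 i : ℤ) ≠ 0 := by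
      intro h
      apply hc0
      rw [hcint, h, Int.cast_zero]
    have h1c : (1:ℝ) ≤ |c| := by
      rw [hcint, ← Int.cast_abs]
      exact_mod_cast Int.one_le_abs hm0
    have hnorm : ‖A.mulVec wR‖ = |c| * ‖A.mulVec vR‖ := by
      rw [hwc, Matrix.mulVec_smul, norm_smul, Real.norm_eq_abs]
    have : ‖A.mulVec vR‖ ≤ ‖A.mulVec wR‖ := by
      rw [hnorm]
      exact le_mul_of_one_le_left (norm_nonneg _) h1c
    linarith
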